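/- There exists a constant C > 0 such that ∫_{0}^{τ} [ln(λ(ϑ₁, t)) − ln(λ(ϑ₂, t))]² dt ≤ C·|ϑ₁ − ϑ₂|^{2κ + 1} for all ϑ₁, ϑ₂ ∈ Θ. -/

import Mathlib

open MeasureTheory Real Set Filter

/-- The cusp signal shape: `ψ(x) = (x/δ)^κ` for `0 < x < δ`, `1` for `x ≥ δ`, `0` for `x ≤ 0`. -/
noncomputable def psi (δ κ : ℝ) (x : ℝ) : ℝ :=
  if δ ≤ x then 1 else if 0 < x then (x / δ) ^ κ else 0

/-- Theoretical intensity `λ(ϑ, t) = S ψ(t − ϑ) + λ₀`. -/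
noncomputable def lamT (S lam0 δ κ : ℝ) (ϑ t : ℝ) : ℝ :=
  S * psi δ κ (t - ϑ) + lam0

/-- Real intensity `λ*(ϑ₀, t) = (S + h) ψ(t − ϑ₀) + λ₀`. -/
noncomputable def lamR (S h lam0 δ κ : ℝ) (ϑ₀ t : ℝ) : ℝ :=
  (S + h) * psi δ κ (t - ϑ₀) + lam0

/-- The Kullback–Leibler divergence `J(ϑ)`. -/
noncomputable def JKL (S h lam0 δ κ τ ϑ₀ : ℝ) (ϑ : ℝ) : ℝ :=
  ∫ t in (min ϑ ϑ₀)..τ,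
    (lamT S lam0 δ κ ϑ t / lamR S h lam0 δ κ ϑ₀ t - 1 -
      Real.log (lamT S lam0 δ κ ϑ t / lamR S h lam0 δ κ ϑ₀ t)) *
      lamR S h lam0 δ κ ϑ₀ t

section helpers
variable {δ κ : ℝ}

lemma psi_of_nonpos (hδ : 0 < δ) {x : ℝ} (hx : x ≤ 0) : psi δ κ x = 0 := by
  unfold psi
  rw [if_neg (by linarith), if_neg (by linarith)]

lemma psi_of_ge {x : ℝ} (hx : δ ≤ x) : psi δ κ x = 1 := by
  unfold psi; rw [if_pos hx]

lemma psi_nonneg (hδ : 0 < δ) (hκ : 0 ≤ κ) (x : ℝ) : 0 ≤ psi δ κ x := by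
  unfold psi
  split_ifs with h1 h2
  · norm_num
  · positivity
  · exact le_refl 0

lemma psi_le_one (hδ : 0 < δ) (hκ : 0 ≤ κ) (x : ℝ) : psi δ κ x ≤ 1 := by
  unfold psi
  split_ifs with h1 h2
  · exact le_refl 1
  · exact Real.rpow_le_one (by positivity) (by rw [div_le_one hδ]; linarith) hκ
  · norm_num

lemma psi_le_bound (hδ : 0 < δ) (hκ : 0 ≤ κ) {y M : ℝ} (hM : 0 ≤ M) (h : y ≤ M) :
    psi δ κ y ≤ (M / δ) ^ κ := by
  rcases le_or_gt y 0 with hy | hy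
  · rw [psi_of_nonpos hδ hy]; positivity
  unfold psi
  split_ifs with h1
  · exact Real.one_le_rpow (by rw [le_div_iff₀ hδ]; linarith) hκ
  · exact Real.rpow_le_rpow (by positivity) (by gcongr) hκ

lemma psi_mono_pos (hδ : 0 < δ) (hκ : 0 ≤ κ) {x y : ℝ} (hx : 0 < x) (hxy : x ≤ y) :
    psi δ κ x ≤ psi δ κ y := by
  unfold psi
  split_ifs with h1 h2 h3 h4
  · exact le_refl 1
  · linarith
  · linarith
  · exact Real.rpow_le_one (by positivity) (by rw [div_le_one hδ]; linarith) hκ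
  · exact Real.rpow_le_rpow (by positivity) (by gcongr) hκ
  · linarith

lemma psi_incr (hδ : 0 < δ) (hκ0 : 0 < κ) (hκ1 : κ ≤ 1) {x d : ℝ} (hx : 0 < x) (hd : 0 ≤ d) :
    psi δ κ (x + d) - psi δ κ x ≤ κ * d * x ^ (κ - 1) / δ ^ κ := by
  rcases le_or_gt δ x with h1 | h1
  · rw [psi_of_ge h1, psi_of_ge (by linarith : δ ≤ x + d)]
    have : (0:ℝ) ≤ κ * d * x ^ (κ - 1) / δ ^ κ := by positivity
    linarith
  · have hψx : psi δ κ x = (x / δ) ^ κ := by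
      unfold psi; rw [if_neg (by linarith), if_pos hx]
    have h2 : psi δ κ (x + d) ≤ ((x + d) / δ) ^ κ :=
      psi_le_bound hδ hκ0.le (by linarith) le_rfl
    have key : ((x + d) / δ) ^ κ ≤ (x / δ) ^ κ + κ * d * x ^ (κ - 1) / δ ^ κ := by
      have hb : (1 + d / x) ^ κ ≤ 1 + κ * (d / x) :=
        rpow_one_add_le_one_add_mul_self (by have := div_nonneg hd hx.le; linarith) hκ0.le hκ1
      have hxd : x + d = x * (1 + d / x) := by field_simp
      have e1 : ((x + d) / δ) ^ κ = (x ^ κ * (1 + d / x) ^ κ) / δ ^ κ := by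
        rw [Real.div_rpow (by linarith) hδ.le, hxd,
          Real.mul_rpow hx.le (by positivity)]
      have e2 : (x / δ) ^ κ = x ^ κ / δ ^ κ := Real.div_rpow hx.le hδ.le κ
      rw [e1, e2]
      have hx1 : x ^ κ * (1 + d / x) ^ κ ≤ x ^ κ + κ * d * x ^ (κ - 1) := by
        have e3 : x ^ (κ - 1) = x ^ κ / x := by
          rw [Real.rpow_sub hx, Real.rpow_one]
        have := mul_le_mul_of_nonneg_left hb (Real.rpow_nonneg hx.le κ)
        calc x ^ κ * (1 + d / x) ^ κ ≤ x ^ κ * (1 + κ * (d / x)) := this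
          _ = x ^ κ + κ * d * (x ^ κ / x) := by field_simp
          _ = x ^ κ + κ * d * x ^ (κ - 1) := by rw [e3]
      have hδκ : (0:ℝ) < δ ^ κ := Real.rpow_pos_of_pos hδ κ
      rw [← add_div]
      exact (div_le_div_iff_of_pos_right hδκ).mpr hx1
    linarith [h2, key]

lemma psi_measurable (hκ : 0 ≤ κ) : Measurable (psi δ κ) := by
  unfold psi
  have hc : Continuous fun x : ℝ => (x / δ) ^ κ := by
    have h1 : Continuous fun x : ℝ => x ^ κ :=
      continuous_iff_continuousAt.mpr fun x => Real.continuousAt_rpow_const x κ (Or.inr hκ)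
    exact h1.comp (continuous_id.div_const δ)
  exact Measurable.ite (measurableSet_le measurable_const measurable_id)
    measurable_const <| Measurable.ite (measurableSet_lt measurable_const measurable_id)
      hc.measurable measurable_const

lemma abs_log_sub_log_le {a b c : ℝ} (hc : 0 < c) (ha : c ≤ a) (hb : c ≤ b) :
    |Real.log a - Real.log b| ≤ |a - b| / c := by
  wlog h : b ≤ a generalizing a b
  · rw [abs_sub_comm, abs_sub_comm a b]; exact this hb ha (le_of_not_ge h)
  have hb0 : 0 < b := hc.trans_le hb
  have ha0 : 0 < a := hc.trans_le ha
  have hlog : Real.log b ≤ Real.log a := Real.log_le_log hb0 h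
  rw [abs_of_nonneg (by linarith), abs_of_nonneg (by linarith),
    ← Real.log_div ha0.ne' hb0.ne']
  have h1 := Real.log_le_sub_one_of_pos (div_pos ha0 hb0)
  have h2 : a / b - 1 = (a - b) / b := by field_simp
  have h3 : (a - b) / b ≤ (a - b) / c := by gcongr
  linarith

end helpers

set_option maxHeartbeats 2000000 in
lemma key_lemma (S lam0 δ τ κ : ℝ) (hS : 0 < S) (hlam0 : 0 < lam0) (hδ : 0 < δ)
    (hκ0 : 0 < κ) (hκ1 : κ < 1/2) {ϑ₁ ϑ₂ : ℝ} (h12 : ϑ₁ ≤ ϑ₂)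
    (h1 : 0 < ϑ₁) (h2 : ϑ₂ + δ ≤ τ) :
    (∫ t in (0:ℝ)..τ,
        (Real.log (lamT S lam0 δ κ ϑ₁ t) - Real.log (lamT S lam0 δ κ ϑ₂ t)) ^ 2) ≤
      ((S/lam0)^2 * (τ/δ^(2*κ+1) + 2^(2*κ+1)/δ^(2*κ) + κ^2/((1-2*κ)*δ^(2*κ))))
        * (ϑ₂ - ϑ₁)^(2*κ+1) := by
  set L : ℝ := S / lam0 with hLdef
  have hLpos : 0 < L := div_pos hS hlam0
  set f : ℝ → ℝ := fun t =>
    (Real.log (lamT S lam0 δ κ ϑ₁ t) - Real.log (lamT S lam0 δ κ ϑ₂ t)) ^ 2 with hfdef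
  have hτpos : 0 < τ := by linarith
  -- constants
  have hA : 0 ≤ τ / δ ^ (2*κ+1) := by positivity
  have hB : 0 ≤ (2:ℝ) ^ (2*κ+1) / δ ^ (2*κ) := by positivity
  have hCc : 0 ≤ κ^2 / ((1-2*κ) * δ ^ (2*κ)) := by
    have : (0:ℝ) < 1 - 2*κ := by linarith
    positivity
  -- measurability
  have hlamT : ∀ ϑ : ℝ, Measurable (fun t => lamT S lam0 δ κ ϑ t) := by
    intro ϑ
    unfold lamT
    exact ((measurable_const.mul ((psi_measurable hκ0.le).comp
      (measurable_id.sub_const ϑ))).add_const lam0)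
  have hfmeas : Measurable f := by
    apply Measurable.pow_const
    exact (Real.measurable_log.comp (hlamT ϑ₁)).sub (Real.measurable_log.comp (hlamT ϑ₂))
  -- lower bound on intensities
  have hlamge : ∀ ϑ t : ℝ, lam0 ≤ lamT S lam0 δ κ ϑ t := by
    intro ϑ t
    unfold lamT
    have h := psi_nonneg hδ hκ0.le (t - ϑ)
    nlinarith
  -- pointwise bound via log-Lipschitz
  have hptw : ∀ t : ℝ, f t ≤ L^2 * (psi δ κ (t - ϑ₁) - psi δ κ (t - ϑ₂))^2 := by
    intro t
    have habs := abs_log_sub_log_le hlam0 (hlamge ϑ₁ t) (hlamge ϑ₂ t)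
    have hdiff : lamT S lam0 δ κ ϑ₁ t - lamT S lam0 δ κ ϑ₂ t
        = S * (psi δ κ (t - ϑ₁) - psi δ κ (t - ϑ₂)) := by unfold lamT; ring
    calc f t = |Real.log (lamT S lam0 δ κ ϑ₁ t) - Real.log (lamT S lam0 δ κ ϑ₂ t)|^2 :=
          (sq_abs _).symm
      _ ≤ (|lamT S lam0 δ κ ϑ₁ t - lamT S lam0 δ κ ϑ₂ t| / lam0)^2 := by
          apply pow_le_pow_left₀ (abs_nonneg _) habs
      _ = L^2 * (psi δ κ (t - ϑ₁) - psi δ κ (t - ϑ₂))^2 := by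
          rw [hdiff, abs_mul, abs_of_pos hS, div_pow, mul_pow, sq_abs, hLdef, div_pow]
          ring
  have hfnn : ∀ t : ℝ, 0 ≤ f t := fun t => sq_nonneg _
  have hfle : ∀ t : ℝ, f t ≤ L^2 := by
    intro t
    have b1 := psi_nonneg hδ hκ0.le (t - ϑ₁)
    have b2 := psi_nonneg hδ hκ0.le (t - ϑ₂)
    have b3 := psi_le_one hδ hκ0.le (t - ϑ₁)
    have b4 := psi_le_one hδ hκ0.le (t - ϑ₂)
    have h5 := hptw t
    have hsq : (psi δ κ (t - ϑ₁) - psi δ κ (t - ϑ₂))^2 ≤ 1 := by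
      nlinarith [mul_nonneg b1 b2, mul_nonneg (sub_nonneg.2 b3) (sub_nonneg.2 b4)]
    nlinarith [mul_le_mul_of_nonneg_left hsq (sq_nonneg L)]
  -- integrability on any interval
  have hInt : ∀ a b : ℝ, IntervalIntegrable f volume a b := by
    intro a b
    apply (intervalIntegrable_const (c := L^2)).mono_fun hfmeas.aestronglyMeasurable
    filter_upwards with t
    rw [Real.norm_eq_abs, Real.norm_eq_abs, abs_of_nonneg (hfnn t),
      abs_of_nonneg (by positivity : (0:ℝ) ≤ L^2)]
    exact hfle t
  set Dl : ℝ := ϑ₂ - ϑ₁ with hDldef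
  have hDl0 : 0 ≤ Dl := by simp [hDldef]; linarith
  rcases le_or_gt δ Dl with hbig | hsmall
  · -- large separation: crude bound
    have hmono : (∫ t in (0:ℝ)..τ, f t) ≤ ∫ t in (0:ℝ)..τ, L^2 :=
      intervalIntegral.integral_mono_on hτpos.le (hInt 0 τ) intervalIntegrable_const
        (fun t _ => hfle t)
    have hconst : (∫ t in (0:ℝ)..τ, (L^2 : ℝ)) = τ * L^2 := by
      simp [mul_comm]
    have hX : δ ^ (2*κ+1) ≤ Dl ^ (2*κ+1) :=
      Real.rpow_le_rpow hδ.le hbig (by linarith)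
    have hδp : (0:ℝ) < δ ^ (2*κ+1) := Real.rpow_pos_of_pos hδ _
    have h5 : τ ≤ τ / δ ^ (2*κ+1) * Dl ^ (2*κ+1) := by
      rw [div_mul_eq_mul_div, le_div_iff₀ hδp]
      nlinarith
    have hXnn : 0 ≤ Dl ^ (2*κ+1) := Real.rpow_nonneg hDl0 _
    calc (∫ t in (0:ℝ)..τ, f t) ≤ τ * L^2 := by rw [← hconst]; exact hmono
      _ ≤ (L^2 * (τ/δ^(2*κ+1) + 2^(2*κ+1)/δ^(2*κ) + κ^2/((1-2*κ)*δ^(2*κ)))) * Dl^(2*κ+1) := by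
          nlinarith [mul_le_mul_of_nonneg_left h5 (sq_nonneg L),
            mul_nonneg (mul_nonneg (sq_nonneg L) hB) hXnn,
            mul_nonneg (mul_nonneg (sq_nonneg L) hCc) hXnn]
  · rcases eq_or_lt_of_le hDl0 with hDz | hDlpos
    · -- ϑ₁ = ϑ₂
      have he : ϑ₁ = ϑ₂ := by
        have h0 : (0:ℝ) = ϑ₂ - ϑ₁ := hDz.trans hDldef
        linarith
      have hf0 : ∀ t, f t = 0 := by intro t; simp [hfdef, he]
      have hI0 : (∫ t in (0:ℝ)..τ, f t) = 0 := by
        rw [intervalIntegral.integral_congr (g := fun _ => (0:ℝ)) (fun t _ => hf0 t)]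
        simp
      rw [hI0]
      have hz : Dl ^ (2*κ+1) = 0 := by
        rw [← hDz, Real.zero_rpow (by positivity : (0:ℝ) < 2*κ+1).ne']
      rw [hz, mul_zero]
    · -- main case : 0 < Dl < δ
      set b : ℝ := ϑ₂ + Dl with hbdef
      set c : ℝ := ϑ₂ + δ with hcdef
      have hDleq : Dl = ϑ₂ - ϑ₁ := hDldef
      have hab : ϑ₁ ≤ b := by rw [hbdef]; linarith
      have hbc : b ≤ c := by rw [hbdef, hcdef]; linarith
      have hcτ : c ≤ τ := by rw [hcdef]; linarith
      have hXnn : 0 ≤ Dl ^ (2*κ+1) := Real.rpow_nonneg hDl0 _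
      -- splitting
      have e1 := intervalIntegral.integral_add_adjacent_intervals (hInt 0 ϑ₁) (hInt ϑ₁ τ)
      have e2 := intervalIntegral.integral_add_adjacent_intervals (hInt ϑ₁ b) (hInt b τ)
      have e3 := intervalIntegral.integral_add_adjacent_intervals (hInt b c) (hInt c τ)
      -- zero pieces
      have hz1 : (∫ t in (0:ℝ)..ϑ₁, f t) = 0 := by
        rw [intervalIntegral.integral_congr (g := fun _ => (0:ℝ)) ?_]
        · simp
        · intro t ht
          rw [Set.uIcc_of_le h1.le] at ht
          have ht1 : t - ϑ₁ ≤ 0 := by have := ht.2; linarith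
          have ht2 : t - ϑ₂ ≤ 0 := by have := ht.2; linarith
          simp [hfdef, lamT, psi_of_nonpos hδ ht1, psi_of_nonpos hδ ht2]
      have hz4 : (∫ t in c..τ, f t) = 0 := by
        rw [intervalIntegral.integral_congr (g := fun _ => (0:ℝ)) ?_]
        · simp
        · intro t ht
          rw [Set.uIcc_of_le hcτ] at ht
          have htc : c ≤ t := ht.1
          rw [hcdef] at htc
          have ht1 : δ ≤ t - ϑ₁ := by linarith
          have ht2 : δ ≤ t - ϑ₂ := by linarith
          simp [hfdef, lamT, psi_of_ge ht1, psi_of_ge ht2]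
      -- piece 2 : [ϑ₁, b]
      have hM : (0:ℝ) ≤ 2*Dl := by linarith
      have hb2 : (∫ t in ϑ₁..b, f t) ≤ (2*Dl) * (L^2 * (2*Dl/δ)^(2*κ)) := by
        have hpt : ∀ t ∈ Set.Icc ϑ₁ b, f t ≤ L^2 * (2*Dl/δ)^(2*κ) := by
          intro t ht
          have htb : t ≤ b := ht.2
          rw [hbdef] at htb
          have hy1 : t - ϑ₁ ≤ 2*Dl := by linarith
          have hy2 : t - ϑ₂ ≤ 2*Dl := by linarith
          have c1 := psi_le_bound hδ hκ0.le hM hy1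
          have c2 := psi_le_bound hδ hκ0.le hM hy2
          have c3 := psi_nonneg hδ hκ0.le (t - ϑ₁)
          have c4 := psi_nonneg hδ hκ0.le (t - ϑ₂)
          have hMM : ((2*Dl/δ)^κ)^2 = (2*Dl/δ)^(2*κ) := by
            rw [← Real.rpow_natCast ((2*Dl/δ)^κ) 2, ← Real.rpow_mul (by positivity)]
            congr 1
            push_cast; ring
          have hd2 : (psi δ κ (t-ϑ₁) - psi δ κ (t-ϑ₂))^2 ≤ ((2*Dl/δ)^κ)^2 := by nlinarith
          calc f t ≤ L^2 * (psi δ κ (t-ϑ₁) - psi δ κ (t-ϑ₂))^2 := hptw t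
            _ ≤ L^2 * ((2*Dl/δ)^κ)^2 := mul_le_mul_of_nonneg_left hd2 (sq_nonneg L)
            _ = L^2 * (2*Dl/δ)^(2*κ) := by rw [hMM]
        have hba : b - ϑ₁ = 2*Dl := by rw [hbdef]; linarith
        calc (∫ t in ϑ₁..b, f t) ≤ ∫ t in ϑ₁..b, (L^2 * (2*Dl/δ)^(2*κ)) :=
              intervalIntegral.integral_mono_on hab (hInt ϑ₁ b) intervalIntegrable_const hpt
          _ = (b - ϑ₁) * (L^2 * (2*Dl/δ)^(2*κ)) := by
              rw [intervalIntegral.integral_const, smul_eq_mul]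
          _ = (2*Dl) * (L^2 * (2*Dl/δ)^(2*κ)) := by rw [hba]
      -- piece 3 : [b, c]
      have hδκpos : (0:ℝ) < δ ^ κ := Real.rpow_pos_of_pos hδ κ
      set K : ℝ := L^2 * (κ*Dl/δ^κ)^2 with hKdef
      have hKnn : 0 ≤ K := by positivity
      have hg : ∀ t ∈ Set.Icc b c, f t ≤ K * (t - ϑ₂)^(2*κ-2) := by
        intro t ht
        have htb : b ≤ t := ht.1
        rw [hbdef] at htb
        have hx0 : 0 < t - ϑ₂ := by linarith
        have harg : t - ϑ₁ = (t - ϑ₂) + Dl := by rw [hDleq]; ring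
        have hup : psi δ κ (t-ϑ₁) - psi δ κ (t-ϑ₂) ≤ κ*Dl*(t-ϑ₂)^(κ-1)/δ^κ := by
          rw [harg]; exact psi_incr hδ hκ0 (by linarith) hx0 hDlpos.le
        have hlo : 0 ≤ psi δ κ (t-ϑ₁) - psi δ κ (t-ϑ₂) := by
          rw [harg]
          have := psi_mono_pos hδ hκ0.le hx0 (by linarith : t-ϑ₂ ≤ t-ϑ₂+Dl)
          linarith
        have hsq2 : ((t-ϑ₂)^(κ-1))^2 = (t-ϑ₂)^(2*κ-2) := by
          rw [← Real.rpow_natCast ((t-ϑ₂)^(κ-1)) 2, ← Real.rpow_mul hx0.le]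
          congr 1
          push_cast; ring
        have hd2 : (psi δ κ (t-ϑ₁) - psi δ κ (t-ϑ₂))^2 ≤ (κ*Dl*(t-ϑ₂)^(κ-1)/δ^κ)^2 := by
          nlinarith
        calc f t ≤ L^2 * (psi δ κ (t-ϑ₁) - psi δ κ (t-ϑ₂))^2 := hptw t
          _ ≤ L^2 * (κ*Dl*(t-ϑ₂)^(κ-1)/δ^κ)^2 := mul_le_mul_of_nonneg_left hd2 (sq_nonneg L)
          _ = K * (t-ϑ₂)^(2*κ-2) := by rw [hKdef, ← hsq2]; ring
      have hInt3 : IntervalIntegrable (fun t => K * (t - ϑ₂)^(2*κ-2)) volume b c := by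
        apply ContinuousOn.intervalIntegrable
        apply ContinuousOn.mul continuousOn_const
        intro t ht
        rw [Set.uIcc_of_le hbc] at ht
        have htb : b ≤ t := ht.1
        rw [hbdef] at htb
        have hx0 : t - ϑ₂ ≠ 0 := by
          have : 0 < t - ϑ₂ := by linarith
          exact this.ne'
        exact (ContinuousAt.rpow_const (f := fun x => x - ϑ₂) (x := t) (by fun_prop) (Or.inl hx0)).continuousWithinAt
      have hb3 : (∫ t in b..c, f t) ≤ K * (Dl^(2*κ-1)/(1-2*κ)) := by
        have hstep := intervalIntegral.integral_mono_on hbc (hInt b c) hInt3 hg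
        have hcm : (∫ t in b..c, K * (t-ϑ₂)^(2*κ-2)) = K * ∫ t in b..c, (t-ϑ₂)^(2*κ-2) :=
          intervalIntegral.integral_const_mul _ _
        have hcs : (∫ t in b..c, (t-ϑ₂)^(2*κ-2)) = ∫ x in Dl..δ, x^(2*κ-2) := by
          have h' := intervalIntegral.integral_comp_sub_right
            (a := b) (b := c) (fun x => x^(2*κ-2)) ϑ₂
          rw [hbdef, hcdef] at h'
          simpa [add_sub_cancel_left] using h'
        have hval : (∫ x in Dl..δ, x^(2*κ-2)) = (δ^(2*κ-1) - Dl^(2*κ-1))/(2*κ-1) := by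
          rw [integral_rpow (Or.inr ⟨by intro h; rw [sub_eq_iff_eq_add] at h; linarith,
            by rw [Set.uIcc_of_le hsmall.le]; intro h; linarith [h.1]⟩)]
          have he' : 2*κ-2+1 = 2*κ-1 := by ring
          rw [he']
        have hbound : (δ^(2*κ-1) - Dl^(2*κ-1))/(2*κ-1) ≤ Dl^(2*κ-1)/(1-2*κ) := by
          have hδnn : (0:ℝ) ≤ δ^(2*κ-1) := Real.rpow_nonneg hδ.le _
          have he2 : (δ^(2*κ-1) - Dl^(2*κ-1))/(2*κ-1)
              = (Dl^(2*κ-1) - δ^(2*κ-1))/(1-2*κ) := by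
            rw [div_eq_div_iff (by linarith) (by linarith)]; ring
          rw [he2]
          apply div_le_div_of_nonneg_right ?_ (by linarith)
          linarith
        calc (∫ t in b..c, f t) ≤ ∫ t in b..c, K * (t-ϑ₂)^(2*κ-2) := hstep
          _ = K * ((δ^(2*κ-1) - Dl^(2*κ-1))/(2*κ-1)) := by rw [hcm, hcs, hval]
          _ ≤ K * (Dl^(2*κ-1)/(1-2*κ)) := mul_le_mul_of_nonneg_left hbound hKnn
      -- combine
      have htot : (∫ t in (0:ℝ)..τ, f t)
          ≤ (2*Dl)*(L^2*(2*Dl/δ)^(2*κ)) + K*(Dl^(2*κ-1)/(1-2*κ)) := by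
        linarith
      have hEq1 : (2*Dl)*(L^2*(2*Dl/δ)^(2*κ)) = L^2 * (2^(2*κ+1)/δ^(2*κ)) * Dl^(2*κ+1) := by
        have a1 : (2*Dl/δ)^(2*κ) = 2^(2*κ)*Dl^(2*κ)/δ^(2*κ) := by
          rw [Real.div_rpow (by linarith) hδ.le, Real.mul_rpow (by norm_num) hDlpos.le]
        have a2 : Dl^(2*κ+1) = Dl^(2*κ)*Dl := by
          rw [Real.rpow_add hDlpos, Real.rpow_one]
        have a3 : (2:ℝ)^(2*κ+1) = 2^(2*κ)*2 := by
          rw [Real.rpow_add (by norm_num : (0:ℝ) < 2), Real.rpow_one]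
        rw [a1, a2, a3]; ring
      have hEq2 : K*(Dl^(2*κ-1)/(1-2*κ)) = L^2 * (κ^2/((1-2*κ)*δ^(2*κ))) * Dl^(2*κ+1) := by
        have b2' : ((δ:ℝ)^κ)^2 = δ^(2*κ) := by
          rw [← Real.rpow_natCast (δ^κ) 2, ← Real.rpow_mul hδ.le]
          congr 1
          push_cast; ring
        have b3' : Dl^(2:ℕ) * Dl^(2*κ-1) = Dl^(2*κ+1) := by
          rw [← Real.rpow_natCast Dl 2, ← Real.rpow_add hDlpos]
          congr 1
          push_cast; ring
        have hne1 : (1-2*κ) ≠ (0:ℝ) := ne_of_gt (by linarith)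
        have hne2 : ((δ:ℝ)^κ) ≠ 0 := hδκpos.ne'
        rw [hKdef, ← b3', ← b2']
        field_simp
      have hfin : 0 ≤ L^2 * (τ/δ^(2*κ+1)) * Dl^(2*κ+1) := by positivity
      have hrhs : (L^2 * (τ/δ^(2*κ+1) + 2^(2*κ+1)/δ^(2*κ) + κ^2/((1-2*κ)*δ^(2*κ)))) * Dl^(2*κ+1)
          = L^2*(τ/δ^(2*κ+1))*Dl^(2*κ+1) + L^2 * (2^(2*κ+1)/δ^(2*κ)) * Dl^(2*κ+1)
            + L^2 * (κ^2/((1-2*κ)*δ^(2*κ))) * Dl^(2*κ+1) := by ring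
      linarith [htot, hEq1, hEq2, hfin, hrhs]

theorem stmt_16 (S lam0 δ τ κ α β : ℝ)
    (hS : 0 < S) (hlam0 : 0 < lam0) (hδ : 0 < δ) (hτ : 0 < τ)
    (hκ : κ ∈ Set.Ioo (0 : ℝ) (1 / 2)) (hαβ : α < β)
    (hΘ : Set.Ioo (α - δ) (β + δ) ⊆ Set.Ioo 0 (τ - δ)) :
    ∃ C : ℝ, 0 < C ∧
      ∀ ϑ₁ ∈ Set.Ioo (α - δ) (β + δ), ∀ ϑ₂ ∈ Set.Ioo (α - δ) (β + δ),
        (∫ t in (0 : ℝ)..τ,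
            (Real.log (lamT S lam0 δ κ ϑ₁ t) - Real.log (lamT S lam0 δ κ ϑ₂ t)) ^ 2) ≤
          C * |ϑ₁ - ϑ₂| ^ (2 * κ + 1) := by
  obtain ⟨hκ0, hκ1⟩ := hκ
  have hκ1' : κ < 1/2 := hκ1
  refine ⟨(S/lam0)^2 * (τ/δ^(2*κ+1) + 2^(2*κ+1)/δ^(2*κ) + κ^2/((1-2*κ)*δ^(2*κ))), ?_, ?_⟩
  · have hh1 : (0:ℝ) < τ/δ^(2*κ+1) := by positivity
    have hh2 : (0:ℝ) < (2:ℝ)^(2*κ+1)/δ^(2*κ) := by positivity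
    have hh3 : (0:ℝ) ≤ κ^2/((1-2*κ)*δ^(2*κ)) := by
      have : (0:ℝ) < 1 - 2*κ := by linarith
      positivity
    have hL : (0:ℝ) < (S/lam0)^2 := pow_pos (div_pos hS hlam0) 2
    have : (0:ℝ) < τ/δ^(2*κ+1) + 2^(2*κ+1)/δ^(2*κ) + κ^2/((1-2*κ)*δ^(2*κ)) := by linarith
    exact mul_pos hL this
  · intro ϑ₁ hϑ₁ ϑ₂ hϑ₂
    obtain ⟨h1a, h1b⟩ := hΘ hϑ₁
    obtain ⟨h2a, h2b⟩ := hΘ hϑ₂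
    rcases le_total ϑ₁ ϑ₂ with h | h
    · rw [abs_sub_comm, abs_of_nonneg (by linarith)]
      exact key_lemma S lam0 δ τ κ hS hlam0 hδ hκ0 hκ1' h h1a (by linarith)
    · rw [abs_of_nonneg (by linarith)]
      have hsym : (∫ t in (0:ℝ)..τ,
            (Real.log (lamT S lam0 δ κ ϑ₁ t) - Real.log (lamT S lam0 δ κ ϑ₂ t)) ^ 2)
          = ∫ t in (0:ℝ)..τ,
            (Real.log (lamT S lam0 δ κ ϑ₂ t) - Real.log (lamT S lam0 δ κ ϑ₁ t)) ^ 2 := by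
        apply intervalIntegral.integral_congr
        intro t _
        ring
      rw [hsym]
      exact key_lemma S lam0 δ τ κ hS hlam0 hδ hκ0 hκ1' h h2a (by linarith)
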